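/- For all natural numbers n₁, n₂, m₁, m₂ with n₁ ≥ 1, n₂ ≥ 1, m₁ ≥ 1, m₂ ≥ 1, the degree of the ribbon Zhang–Zhang polynomial (i.e., the Clar number of the ribbon Rb(n₁,n₂,m₁,m₂)) satisfies natDegree(ZZRb(n₁,n₂,m₁,m₂)) = max(Cl_s, Cl_r), where Cl_s = max over k ∈ {0,1,…,min(n₁,m₁)} of ( min(m₁−k, n₂+k) + min(n₁−k, m₂+k) ), and Cl_r = max over k ∈ {1,…,min(n₁,m₁)} of ( 1 + min(m₁−k, n₂+k−1) + min(n₁−k, m₂+k−1) ). -/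

import Mathlib

open Polynomial Finset

noncomputable def ZZM (m n : ℕ) : Polynomial ℤ :=
  ∑ j ∈ Finset.range (min m n + 1),
    Polynomial.C ((m.choose j : ℤ) * (n.choose j : ℤ)) * (1 + Polynomial.X) ^ j

noncomputable def ZZRb (n₁ n₂ m₁ m₂ : ℕ) : Polynomial ℤ :=
  (∑ k ∈ Finset.range (min n₁ m₁ + 1), ZZM (m₁ - k) (n₂ + k) * ZZM (m₂ + k) (n₁ - k))
  + Polynomial.X *
    ∑ k ∈ Finset.Icc 1 (min n₁ m₁), ZZM (m₁ - k) (n₂ + k - 1) * ZZM (m₂ + k - 1) (n₁ - k)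

/-- A polynomial has all nonnegative coefficients. -/
def PNonneg (p : Polynomial ℤ) : Prop := ∀ i, 0 ≤ p.coeff i

lemma pnonneg_add {p q : Polynomial ℤ} (hp : PNonneg p) (hq : PNonneg q) : PNonneg (p + q) := by
  intro i; rw [coeff_add]; exact add_nonneg (hp i) (hq i)

lemma pnonneg_mul {p q : Polynomial ℤ} (hp : PNonneg p) (hq : PNonneg q) : PNonneg (p * q) := by
  intro i; rw [coeff_mul]
  exact Finset.sum_nonneg fun x _ => mul_nonneg (hp _) (hq _)

lemma pnonneg_one : PNonneg 1 := by
  intro i; simp only [coeff_one]; split_ifs <;> norm_num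

lemma pnonneg_pow {p : Polynomial ℤ} (hp : PNonneg p) (n : ℕ) : PNonneg (p ^ n) := by
  induction n with
  | zero => simpa using pnonneg_one
  | succ n ih => rw [pow_succ]; exact pnonneg_mul ih hp

lemma pnonneg_C {a : ℤ} (ha : 0 ≤ a) : PNonneg (Polynomial.C a) := by
  intro i; rw [coeff_C]; split_ifs <;> simp [ha]

lemma pnonneg_one_add_X : PNonneg (1 + Polynomial.X : Polynomial ℤ) := by
  intro i; simp only [coeff_add, coeff_one, coeff_X]; split_ifs <;> norm_num

lemma pnonneg_X : PNonneg (Polynomial.X : Polynomial ℤ) := by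
  intro i; rw [coeff_X]; split_ifs <;> norm_num

lemma one_add_X_ne_zero : (1 + Polynomial.X : Polynomial ℤ) ≠ 0 := fun h => by
  simpa using congrArg (fun p => Polynomial.coeff p 0) h

lemma natDegree_one_add_X : (1 + Polynomial.X : Polynomial ℤ).natDegree = 1 := by
  have h : (1 + Polynomial.X : Polynomial ℤ) = Polynomial.X + Polynomial.C 1 := by
    rw [map_one]; ring
  rw [h, natDegree_X_add_C]

lemma pnonneg_sum {ι : Type*} {s : Finset ι} {f : ι → Polynomial ℤ}
    (h : ∀ i ∈ s, PNonneg (f i)) : PNonneg (∑ i ∈ s, f i) := by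
  intro n; rw [Polynomial.finset_sum_coeff]
  exact Finset.sum_nonneg fun i hi => h i hi n

lemma leadingCoeff_pos {p : Polynomial ℤ} (hp : PNonneg p) (h0 : p ≠ 0) :
    0 < p.leadingCoeff :=
  lt_of_le_of_ne (hp _) (Ne.symm (mt Polynomial.leadingCoeff_eq_zero.mp h0))

lemma coeff_sum_sup_pos {ι : Type*} {s : Finset ι} (hs : s.Nonempty) {f : ι → Polynomial ℤ}
    (hnn : ∀ i ∈ s, PNonneg (f i)) (h0 : ∀ i ∈ s, f i ≠ 0) :
    0 < (∑ i ∈ s, f i).coeff (s.sup fun i => (f i).natDegree) := by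
  obtain ⟨i₀, hi₀, hsup⟩ := Finset.exists_mem_eq_sup s hs (fun i => (f i).natDegree)
  rw [Polynomial.finset_sum_coeff]
  apply Finset.sum_pos' (fun i hi => hnn i hi _)
  refine ⟨i₀, hi₀, ?_⟩
  rw [hsup]
  exact leadingCoeff_pos (hnn i₀ hi₀) (h0 i₀ hi₀)

lemma natDegree_sum_eq_sup {ι : Type*} {s : Finset ι} (hs : s.Nonempty) {f : ι → Polynomial ℤ}
    (hnn : ∀ i ∈ s, PNonneg (f i)) (h0 : ∀ i ∈ s, f i ≠ 0) :
    (∑ i ∈ s, f i).natDegree = s.sup fun i => (f i).natDegree := by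
  apply le_antisymm
  · exact Polynomial.natDegree_sum_le_of_forall_le s f
      (fun i hi => Finset.le_sup (f := fun i => (f i).natDegree) hi)
  · exact Polynomial.le_natDegree_of_ne_zero (ne_of_gt (coeff_sum_sup_pos hs hnn h0))

lemma sum_ne_zero {ι : Type*} {s : Finset ι} (hs : s.Nonempty) {f : ι → Polynomial ℤ}
    (hnn : ∀ i ∈ s, PNonneg (f i)) (h0 : ∀ i ∈ s, f i ≠ 0) :
    (∑ i ∈ s, f i) ≠ 0 := fun h => by
  have := coeff_sum_sup_pos hs hnn h0
  rw [h] at this; simp at this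

lemma natDegree_add_eq_max {p q : Polynomial ℤ} (hp : PNonneg p) (hq : PNonneg q)
    (hp0 : p ≠ 0) (hq0 : q ≠ 0) :
    (p + q).natDegree = max p.natDegree q.natDegree := by
  apply le_antisymm (Polynomial.natDegree_add_le p q)
  apply Polynomial.le_natDegree_of_ne_zero
  rcases max_cases p.natDegree q.natDegree with ⟨h, _⟩ | ⟨h, _⟩ <;> rw [h, coeff_add]
  · exact ne_of_gt (add_pos_of_pos_of_nonneg (leadingCoeff_pos hp hp0) (hq _))
  · exact ne_of_gt (add_pos_of_nonneg_of_pos (hp _) (leadingCoeff_pos hq hq0))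

lemma ZZM_nonneg (m n : ℕ) : PNonneg (ZZM m n) := by
  apply pnonneg_sum
  intro j _
  exact pnonneg_mul (pnonneg_C (by positivity)) (pnonneg_pow pnonneg_one_add_X j)

lemma ZZM_term_ne_zero {m n j : ℕ} (hj : j ∈ Finset.range (min m n + 1)) :
    Polynomial.C ((m.choose j : ℤ) * (n.choose j : ℤ)) * (1 + Polynomial.X) ^ j ≠ 0 := by
  rw [Finset.mem_range, Nat.lt_succ_iff, le_min_iff] at hj
  have hc : ((m.choose j : ℤ) * (n.choose j : ℤ)) ≠ 0 := by
    have h1 := Nat.choose_pos hj.1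
    have h2 := Nat.choose_pos hj.2
    positivity
  exact mul_ne_zero (by simpa using hc) (pow_ne_zero _ one_add_X_ne_zero)

lemma ZZM_ne_zero (m n : ℕ) : ZZM m n ≠ 0 := by
  apply sum_ne_zero ⟨0, Finset.mem_range.mpr (Nat.succ_pos _)⟩
  · intro j _
    exact pnonneg_mul (pnonneg_C (by positivity)) (pnonneg_pow pnonneg_one_add_X j)
  · intro j hj; exact ZZM_term_ne_zero hj

lemma ZZM_natDegree (m n : ℕ) : (ZZM m n).natDegree = min m n := by
  rw [ZZM, natDegree_sum_eq_sup ⟨0, Finset.mem_range.mpr (Nat.succ_pos _)⟩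
    (fun j _ => pnonneg_mul (pnonneg_C (by positivity)) (pnonneg_pow pnonneg_one_add_X j))
    (fun j hj => ZZM_term_ne_zero hj)]
  have hdeg : ∀ j ∈ Finset.range (min m n + 1),
      (Polynomial.C ((m.choose j : ℤ) * (n.choose j : ℤ)) * (1 + Polynomial.X) ^ j).natDegree
        = j := by
    intro j hj
    rw [Finset.mem_range, Nat.lt_succ_iff, le_min_iff] at hj
    have hc : ((m.choose j : ℤ) * (n.choose j : ℤ)) ≠ 0 := by
      have h1 := Nat.choose_pos hj.1
      have h2 := Nat.choose_pos hj.2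
      positivity
    rw [Polynomial.natDegree_mul (by simpa using hc) (pow_ne_zero _ one_add_X_ne_zero),
      Polynomial.natDegree_C, Polynomial.natDegree_pow, natDegree_one_add_X]
    ring
  rw [Finset.sup_congr rfl hdeg]
  apply le_antisymm
  · exact Finset.sup_le fun j hj => Nat.lt_succ_iff.mp (Finset.mem_range.mp hj)
  · exact Finset.le_sup (f := id) (Finset.mem_range.mpr (Nat.lt_succ_self _))

lemma sup_const_add {ι : Type*} {s : Finset ι} (hs : s.Nonempty) (c : ℕ) (f : ι → ℕ) :
    s.sup (fun i => c + f i) = c + s.sup f := by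
  apply le_antisymm
  · exact Finset.sup_le fun i hi => Nat.add_le_add_left (Finset.le_sup hi) c
  · obtain ⟨i₀, hi₀, hsup⟩ := Finset.exists_mem_eq_sup s hs f
    rw [hsup]
    exact Finset.le_sup (f := fun i => c + f i) hi₀

theorem zzrb_natDegree (n₁ n₂ m₁ m₂ : ℕ)
    (hn₁ : 1 ≤ n₁) (hn₂ : 1 ≤ n₂) (hm₁ : 1 ≤ m₁) (hm₂ : 1 ≤ m₂) :
    (ZZRb n₁ n₂ m₁ m₂).natDegree =
      max
        ((Finset.range (min n₁ m₁ + 1)).sup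
          (fun k => min (m₁ - k) (n₂ + k) + min (n₁ - k) (m₂ + k)))
        ((Finset.Icc 1 (min n₁ m₁)).sup
          (fun k => 1 + min (m₁ - k) (n₂ + k - 1) + min (n₁ - k) (m₂ + k - 1))) := by
  have hIcc : (Finset.Icc 1 (min n₁ m₁)).Nonempty :=
    ⟨1, Finset.mem_Icc.mpr ⟨le_refl 1, le_min hn₁ hm₁⟩⟩
  have hrange : (Finset.range (min n₁ m₁ + 1)).Nonempty :=
    ⟨0, Finset.mem_range.mpr (Nat.succ_pos _)⟩
  set A := ∑ k ∈ Finset.range (min n₁ m₁ + 1), ZZM (m₁ - k) (n₂ + k) * ZZM (m₂ + k) (n₁ - k)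
    with hA
  set B := ∑ k ∈ Finset.Icc 1 (min n₁ m₁), ZZM (m₁ - k) (n₂ + k - 1) * ZZM (m₂ + k - 1) (n₁ - k)
    with hB
  have hAnn : PNonneg A :=
    pnonneg_sum fun k _ => pnonneg_mul (ZZM_nonneg _ _) (ZZM_nonneg _ _)
  have hBnn : PNonneg B :=
    pnonneg_sum fun k _ => pnonneg_mul (ZZM_nonneg _ _) (ZZM_nonneg _ _)
  have hA0 : A ≠ 0 :=
    sum_ne_zero hrange (fun k _ => pnonneg_mul (ZZM_nonneg _ _) (ZZM_nonneg _ _))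
      (fun k _ => mul_ne_zero (ZZM_ne_zero _ _) (ZZM_ne_zero _ _))
  have hB0 : B ≠ 0 :=
    sum_ne_zero hIcc (fun k _ => pnonneg_mul (ZZM_nonneg _ _) (ZZM_nonneg _ _))
      (fun k _ => mul_ne_zero (ZZM_ne_zero _ _) (ZZM_ne_zero _ _))
  have hAdeg : A.natDegree =
      (Finset.range (min n₁ m₁ + 1)).sup
        (fun k => min (m₁ - k) (n₂ + k) + min (n₁ - k) (m₂ + k)) := by
    rw [hA, natDegree_sum_eq_sup hrange
      (fun k _ => pnonneg_mul (ZZM_nonneg _ _) (ZZM_nonneg _ _))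
      (fun k _ => mul_ne_zero (ZZM_ne_zero _ _) (ZZM_ne_zero _ _))]
    apply Finset.sup_congr rfl
    intro k _
    rw [Polynomial.natDegree_mul (ZZM_ne_zero _ _) (ZZM_ne_zero _ _),
      ZZM_natDegree, ZZM_natDegree, min_comm (m₂ + k)]
  have hBdeg : B.natDegree =
      (Finset.Icc 1 (min n₁ m₁)).sup
        (fun k => min (m₁ - k) (n₂ + k - 1) + min (n₁ - k) (m₂ + k - 1)) := by
    rw [hB, natDegree_sum_eq_sup hIcc
      (fun k _ => pnonneg_mul (ZZM_nonneg _ _) (ZZM_nonneg _ _))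
      (fun k _ => mul_ne_zero (ZZM_ne_zero _ _) (ZZM_ne_zero _ _))]
    apply Finset.sup_congr rfl
    intro k _
    rw [Polynomial.natDegree_mul (ZZM_ne_zero _ _) (ZZM_ne_zero _ _),
      ZZM_natDegree, ZZM_natDegree, min_comm (m₂ + k - 1)]
  have hXB0 : Polynomial.X * B ≠ 0 := mul_ne_zero Polynomial.X_ne_zero hB0
  have hXBnn : PNonneg (Polynomial.X * B) := pnonneg_mul pnonneg_X hBnn
  have hXBdeg : (Polynomial.X * B).natDegree =
      (Finset.Icc 1 (min n₁ m₁)).sup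
        (fun k => 1 + min (m₁ - k) (n₂ + k - 1) + min (n₁ - k) (m₂ + k - 1)) := by
    rw [Polynomial.natDegree_mul Polynomial.X_ne_zero hB0, Polynomial.natDegree_X, hBdeg,
      ← sup_const_add hIcc 1]
    apply Finset.sup_congr rfl
    intro k _
    ring
  rw [ZZRb, ← hA, ← hB, natDegree_add_eq_max hAnn hXBnn hA0 hXB0, hAdeg, hXBdeg]
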